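/- arXiv:2507.22526 — 2 statements merged into one kernel-verified Lean document; each statement's English description precedes it below -/
import Mathlib

section
/- The almost complex structure J(pα,qβ) = (1/√3)(p(α−2β), q(2α−β)) on S³ × S³ satisfies J² = −Id and is compatible with the metric g((pα,qβ),(pγ,qδ)) = (4/9)⟨(pα,qβ),(pγ,qδ)⟩ − (2/9)⟨(pβ,qα),(pγ,qδ)⟩, i.e. g(JX, JY) = g(X, Y). -/
open RealInnerProductSpace

/-- The almost complex structure `J(pα,qβ) = (1/√3)(p(α−2β), q(2α−β))` on
`S³ × S³`, written in the coordinates `(α, β)` of a tangent vector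
`(pα, qβ)` with `α, β` imaginary quaternions, satisfies `J² = −Id` and is
compatible with the nearly Kähler metric
`g((α,β),(γ,δ)) = (4/9)(⟨α,γ⟩+⟨β,δ⟩) − (2/9)(⟨β,γ⟩+⟨α,δ⟩)`. -/
theorem s3s3_almost_complex_structure
    (g : (Quaternion ℝ × Quaternion ℝ) → (Quaternion ℝ × Quaternion ℝ) → ℝ)
    (hg : ∀ v w, g v w = (4 / 9) * (⟪v.1, w.1⟫ + ⟪v.2, w.2⟫)
      - (2 / 9) * (⟪v.2, w.1⟫ + ⟪v.1, w.2⟫))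
    (J : (Quaternion ℝ × Quaternion ℝ) → (Quaternion ℝ × Quaternion ℝ))
    (hJ : ∀ v, J v = (Real.sqrt 3)⁻¹ • (v.1 - (2 : ℝ) • v.2, (2 : ℝ) • v.1 - v.2)) :
    (∀ v : Quaternion ℝ × Quaternion ℝ, v.1.re = 0 → v.2.re = 0 →
      J (J v) = -v) ∧
    (∀ v w : Quaternion ℝ × Quaternion ℝ, v.1.re = 0 → v.2.re = 0 →
      w.1.re = 0 → w.2.re = 0 → g (J v) (J w) = g v w) := by
  have h3 : (Real.sqrt 3)⁻¹ * (Real.sqrt 3)⁻¹ = 3⁻¹ := by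
    rw [← mul_inv]
    norm_num [Real.mul_self_sqrt]
  constructor
  · intro v _ _
    rw [hJ, hJ]
    simp only [Prod.smul_mk, smul_sub, smul_smul, Prod.ext_iff, Prod.fst_neg,
      Prod.snd_neg, Prod.smul_fst, Prod.smul_snd]
    constructor <;> (match_scalars <;> nlinarith [h3])
  · intro v w _ _ _ _
    rw [hg, hg, hJ, hJ]
    simp only [Prod.smul_fst, Prod.smul_snd, real_inner_smul_left, real_inner_smul_right,
      inner_sub_left, inner_sub_right]
    ring_nf
    rw [show ((Real.sqrt 3)⁻¹ ^ 2 : ℝ) = 3⁻¹ from by rw [sq]; exact h3]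
    ring
end

section
/- Suppose real numbers h11, h22, h33, h44, h55, h23 and an angle θ₂ with sin θ₂ ≠ 0, cos θ₂ ≠ 0 satisfy: h11 − 2h22 + h55 + 2 h23 tan θ₂ = 0, −2h11 + h22 + h44 − h23 tan θ₂ = 0, h11 − 2h44 + h55 = 0, 5h44 − 5h55 + 2h23 csc(2θ₂) = 0, and h11 − 2h33 + h55 + 2h23 cot θ₂ = 0. Then h23 = 0 and h11 = h22 = h33 = h44 = h55. -/
/-- Final linear system for a constant sectional curvature hypersurface of
`F(ℂ³)` whose normal has components in all three distributions (Table 8):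
it forces `h23 = 0` and total umbilicity. -/
theorem flag_manifold_final_linear_system
    (h11 h22 h33 h44 h55 h23 θ : ℝ)
    (hs : Real.sin θ ≠ 0) (hc : Real.cos θ ≠ 0)
    (e1 : h11 - 2 * h22 + h55 + 2 * h23 * Real.tan θ = 0)
    (e2 : -2 * h11 + h22 + h44 - h23 * Real.tan θ = 0)
    (e3 : h11 - 2 * h44 + h55 = 0)
    (e4 : 5 * h44 - 5 * h55 + 2 * h23 * (1 / Real.sin (2 * θ)) = 0)
    (e5 : h11 - 2 * h33 + h55 + 2 * h23 * (Real.cos θ / Real.sin θ) = 0) :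
    h23 = 0 ∧ h11 = h22 ∧ h22 = h33 ∧ h33 = h44 ∧ h44 = h55 := by
  have key : -3 * h11 + 2 * h44 + h55 = 0 := by linear_combination e1 + 2 * e2
  have h14 : h11 = h44 := by linarith
  have h45 : h44 = h55 := by linarith
  have hsin2 : Real.sin (2 * θ) ≠ 0 := by
    rw [Real.sin_two_mul]; exact mul_ne_zero (mul_ne_zero two_ne_zero hs) hc
  have h230 : h23 = 0 := by
    have : 2 * h23 * (1 / Real.sin (2 * θ)) = 0 := by linarith
    field_simp at this
    linarith
  have htan : h23 * Real.tan θ = 0 := by rw [h230]; ring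
  have hcot : h23 * (Real.cos θ / Real.sin θ) = 0 := by rw [h230]; ring
  refine ⟨h230, by linarith, by linarith, by linarith, h45⟩
end
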